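/- With the notation of the adjoint computation, the differential of F(U_0) = (1/Δx)∫_0^{Δx} U(x,U_0)dx is DF(U_0) = (1/Δx) Λ(0)^T, where Λ(x) is the matrix whose columns are the adjoint solutions λ_1(x),...,λ_N(x). -/

import Mathlib

set_option maxHeartbeats 2000000 in
open MeasureTheory in
/-- The differential of `F(U₀) = (1/Δx)∫₀^{Δx} U(x,U₀) dx` is `DF(U₀) = (1/Δx) Λ(0)ᵀ`,
where the columns of `Λ` are the adjoint solutions `λ₁,...,λ_N`. -/
theorem stmt_4 (N : ℕ) (Δx : ℝ) (hΔx : 0 < Δx)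
    (G : (Fin N → ℝ) → ℝ → (Fin N → ℝ))
    (hG : ContDiff ℝ 1 (fun p : (Fin N → ℝ) × ℝ => G p.1 p.2))
    (U : ℝ → (Fin N → ℝ) → (Fin N → ℝ)) (U₀ : Fin N → ℝ)
    (hUode : ∀ u₀, ∀ x ∈ Set.Icc 0 Δx,
      HasDerivWithinAt (fun t => U t u₀) (G (U x u₀) x) (Set.Icc 0 Δx) x)
    (hUinit : ∀ u₀, U 0 u₀ = u₀)
    -- derivative of the flow with respect to the parameter, in each direction δ
    (V : (Fin N → ℝ) → ℝ → Fin N → ℝ)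
    (hV : ∀ δ, ∀ x ∈ Set.Icc 0 Δx,
      HasDerivAt (fun s : ℝ => U x (U₀ + s • δ)) (V δ x) 0)
    -- Jacobian of G with respect to U along the trajectory
    (DG : ℝ → Matrix (Fin N) (Fin N) ℝ)
    (hDG : ∀ x ∈ Set.Icc 0 Δx,
      HasFDerivAt (fun u => G u x)
        (LinearMap.toContinuousLinearMap (Matrix.toLin' (DG x))) (U x U₀))
    -- adjoint solutions λ_j, j = 1,…,N
    (lam : Fin N → ℝ → Fin N → ℝ)
    (hlam_ode : ∀ j, ∀ x ∈ Set.Icc 0 Δx, ∀ i,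
      HasDerivWithinAt (fun t => lam j t i)
        (-(if i = j then (1:ℝ) else 0) - ∑ k, DG x k i * lam j x k) (Set.Icc 0 Δx) x)
    (hlam_end : ∀ j, lam j Δx = 0)
    -- differentiation under the integral sign is valid
    (hswap : ∀ δ j, HasDerivAt (fun s : ℝ => ∫ x in (0:ℝ)..Δx, U x (U₀ + s • δ) j)
      (∫ x in (0:ℝ)..Δx, V δ x j) 0)
    -- F and its Fréchet derivative
    (F : (Fin N → ℝ) → (Fin N → ℝ))
    (hF : ∀ u₀, F u₀ = (Δx)⁻¹ • ∫ x in (0:ℝ)..Δx, U x u₀)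
    (L : (Fin N → ℝ) →L[ℝ] (Fin N → ℝ)) (hL : HasFDerivAt F L U₀) :
    ∀ δ j, L δ j = (Δx)⁻¹ * ∑ i, lam j 0 i * δ i := by
  intro δ j
  have hle : (0:ℝ) ≤ Δx := hΔx.le
  have h0mem : (0:ℝ) ∈ Set.Icc 0 Δx := ⟨le_refl 0, hle⟩
  have hΔmem : Δx ∈ Set.Icc 0 Δx := ⟨hle, le_refl Δx⟩
  set Gf : (Fin N → ℝ) × ℝ → Fin N → ℝ := fun p => G p.1 p.2 with hGfdef
  have hGfdiff : Differentiable ℝ Gf := hG.differentiable one_ne_zero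
  have hGfC : Continuous Gf := hG.continuous
  have hfderivC : Continuous (fderiv ℝ Gf) := hG.continuous_fderiv one_ne_zero
  have hq0cont : ContinuousOn (fun t => U t U₀) (Set.Icc 0 Δx) :=
    fun t ht => (hUode U₀ t ht).continuousWithinAt
  have hqscont : ∀ u₁, ContinuousOn (fun t => U t u₁) (Set.Icc 0 Δx) :=
    fun u₁ t ht => (hUode u₁ t ht).continuousWithinAt
  set J : ℝ → (Fin N → ℝ) →L[ℝ] (Fin N → ℝ) :=
    fun t => (fderiv ℝ Gf (U t U₀, t)).comp (ContinuousLinearMap.inl ℝ (Fin N → ℝ) ℝ) with hJdef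
  have hJcont : ContinuousOn J (Set.Icc 0 Δx) := by
    rw [hJdef]
    exact ContinuousOn.clm_comp
      (hfderivC.comp_continuousOn (hq0cont.prodMk continuousOn_id)) continuousOn_const
  have hJapply : ∀ t (w : Fin N → ℝ), J t w = fderiv ℝ Gf (U t U₀, t) (w, 0) := by
    intro t w
    simp [hJdef]
  -- link between DG and J
  have hDGsum : ∀ t ∈ Set.Icc 0 Δx, ∀ (w : Fin N → ℝ) (i : Fin N),
      ∑ k, DG t i k * w k = J t w i := by
    intro t ht w i
    have h1 : HasFDerivAt (fun u => G u t) (J t) (U t U₀) :=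
      by have := (hGfdiff (U t U₀, t)).hasFDerivAt.comp (U t U₀) (hasFDerivAt_prodMk_left (𝕜 := ℝ) (U t U₀) t); exact this
    have h3 := (hDG t ht).unique h1
    calc ∑ k, DG t i k * w k = ((DG t).mulVec w) i := by
          simp [Matrix.mulVec, dotProduct]
      _ = (LinearMap.toContinuousLinearMap (Matrix.toLin' (DG t))) w i := by
          simp [Matrix.toLin'_apply]
      _ = J t w i := by rw [h3]
  -- bounds
  obtain ⟨Mq, hMq⟩ := isCompact_Icc.exists_bound_of_continuousOn hq0cont
  have hMq0 : 0 ≤ Mq := le_trans (norm_nonneg _) (hMq 0 h0mem)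
  obtain ⟨K₀, hK₀⟩ := ((isCompact_closedBall (0 : Fin N → ℝ) (Mq+1)).prod
    isCompact_Icc).exists_bound_of_continuousOn (hfderivC.continuousOn
      (s := Metric.closedBall (0 : Fin N → ℝ) (Mq+1) ×ˢ Set.Icc 0 Δx))
  set K : ℝ := max K₀ 0 with hKdef
  have hK0 : (0:ℝ) ≤ K := le_max_right _ _
  have hLip : ∀ t ∈ Set.Icc 0 Δx, ∀ u v : Fin N → ℝ, ‖u‖ ≤ Mq+1 → ‖v‖ ≤ Mq+1 →
      ‖G u t - G v t‖ ≤ K * ‖u - v‖ := by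
    intro t ht u v hu hv
    have hs : Convex ℝ (Metric.closedBall (0 : Fin N → ℝ) (Mq+1) ×ˢ Set.Icc 0 Δx) :=
      (convex_closedBall _ _).prod (convex_Icc _ _)
    have hsub : ‖Gf (u,t) - Gf (v,t)‖ ≤ K * ‖((u,t) : (Fin N → ℝ) × ℝ) - (v,t)‖ :=
      Convex.norm_image_sub_le_of_norm_hasFDerivWithin_le
        (fun p _ => (hGfdiff p).hasFDerivAt.hasFDerivWithinAt)
        (fun p hp => le_trans (hK₀ p hp) (le_max_left _ _)) hs
        ⟨by simpa [Metric.mem_closedBall, dist_zero_right] using hv, ht⟩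
        ⟨by simpa [Metric.mem_closedBall, dist_zero_right] using hu, ht⟩
    have hnorm : ‖((u,t) : (Fin N → ℝ) × ℝ) - (v,t)‖ = ‖u - v‖ := by
      simp [Prod.norm_def]
    calc ‖G u t - G v t‖ = ‖Gf (u,t) - Gf (v,t)‖ := rfl
      _ ≤ K * ‖((u,t) : (Fin N → ℝ) × ℝ) - (v,t)‖ := hsub
      _ = K * ‖u - v‖ := by rw [hnorm]
  have hJbound : ∀ t ∈ Set.Icc 0 Δx, ∀ w : Fin N → ℝ, ‖J t w‖ ≤ K * ‖w‖ := by
    intro t ht w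
    rw [hJapply]
    have hmem : ((U t U₀, t) : (Fin N → ℝ) × ℝ) ∈
        Metric.closedBall (0 : Fin N → ℝ) (Mq+1) ×ˢ Set.Icc 0 Δx :=
      ⟨by simpa [Metric.mem_closedBall, dist_zero_right] using
        le_trans (hMq t ht) (by linarith : Mq ≤ Mq + 1), ht⟩
    have hop : ‖fderiv ℝ Gf (U t U₀, t)‖ ≤ K := le_trans (hK₀ _ hmem) (le_max_left _ _)
    have hpn : ‖((w, (0:ℝ)) : (Fin N → ℝ) × ℝ)‖ = ‖w‖ := by simp [Prod.norm_def]
    calc ‖fderiv ℝ Gf (U t U₀, t) (w, 0)‖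
        ≤ ‖fderiv ℝ Gf (U t U₀, t)‖ * ‖((w, (0:ℝ)) : (Fin N → ℝ) × ℝ)‖ :=
          ContinuousLinearMap.le_opNorm _ _
      _ ≤ K * ‖w‖ := by rw [hpn]; exact mul_le_mul_of_nonneg_right hop (norm_nonneg _)
  have hlamcont : ContinuousOn (fun t => lam j t) (Set.Icc 0 Δx) :=
    continuousOn_pi.mpr fun i t ht => (hlam_ode j t ht i).continuousWithinAt
  obtain ⟨Ml, hMl⟩ := isCompact_Icc.exists_bound_of_continuousOn hlamcont
  have hMl0 : 0 ≤ Ml := le_trans (norm_nonneg _) (hMl 0 h0mem)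
  set Cδ : ℝ := ‖δ‖ * Real.exp (K * Δx) with hCδdef
  have hCδ0 : 0 ≤ Cδ := mul_nonneg (norm_nonneg _) (Real.exp_nonneg _)
  -- Gronwall bound
  have key_bound : ∀ s : ℝ, |s| * Cδ < 1 → ∀ t ∈ Set.Icc 0 Δx,
      ‖U t (U₀ + s • δ) - U t U₀‖ ≤ |s| * Cδ := by
    intro s hsmall
    set g : ℝ → Fin N → ℝ := fun t => U t (U₀ + s • δ) - U t U₀ with hgdef
    have hgcont : ContinuousOn g (Set.Icc 0 Δx) := (hqscont _).sub hq0cont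
    have hg0 : ‖g 0‖ = |s| * ‖δ‖ := by
      simp [hgdef, hUinit, add_sub_cancel_left, norm_smul]
    have hnn : (0:ℝ) ≤ |s| * ‖δ‖ := mul_nonneg (abs_nonneg _) (norm_nonneg _)
    have hsδCδ : |s| * ‖δ‖ ≤ |s| * Cδ := by
      have h1 : (1:ℝ) ≤ Real.exp (K * Δx) := Real.one_le_exp (mul_nonneg hK0 hle)
      calc |s| * ‖δ‖ = |s| * ‖δ‖ * 1 := by ring
        _ ≤ |s| * ‖δ‖ * Real.exp (K * Δx) := by nlinarith
        _ = |s| * Cδ := by rw [hCδdef]; ring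
    have grw : ∀ b ∈ Set.Icc 0 Δx, (∀ τ ∈ Set.Ico 0 b, ‖g τ‖ < 1) →
        ∀ t ∈ Set.Icc 0 b, ‖g t‖ ≤ |s| * ‖δ‖ * Real.exp (K * t) := by
      intro b hb hless
      have hderiv : ∀ τ ∈ Set.Ico 0 b, HasDerivWithinAt g
          (G (U τ (U₀ + s • δ)) τ - G (U τ U₀) τ) (Set.Ici τ) τ := by
        intro τ hτ
        have hτ' : τ ∈ Set.Icc 0 Δx := ⟨hτ.1, le_trans hτ.2.le hb.2⟩
        have hmem : Set.Icc 0 Δx ∈ nhdsWithin τ (Set.Ici τ) :=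
          Filter.mem_of_superset
            (Icc_mem_nhdsGE_of_mem ⟨le_refl τ, lt_of_lt_of_le hτ.2 hb.2⟩)
            (Set.Icc_subset_Icc hτ'.1 le_rfl)
        exact ((hUode _ τ hτ').sub (hUode _ τ hτ')).mono_of_mem_nhdsWithin hmem
      have hbound : ∀ τ ∈ Set.Ico 0 b,
          ‖G (U τ (U₀ + s • δ)) τ - G (U τ U₀) τ‖ ≤ K * ‖g τ‖ + 0 := by
        intro τ hτ
        have hτ' : τ ∈ Set.Icc 0 Δx := ⟨hτ.1, le_trans hτ.2.le hb.2⟩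
        have h1 : ‖U τ (U₀ + s • δ)‖ ≤ Mq + 1 := by
          have he : U τ (U₀ + s • δ) = U τ U₀ + g τ := by simp [hgdef]
          rw [he]
          calc ‖U τ U₀ + g τ‖ ≤ ‖U τ U₀‖ + ‖g τ‖ := norm_add_le _ _
            _ ≤ Mq + 1 := add_le_add (hMq τ hτ') (hless τ hτ).le
        have h2 : ‖U τ U₀‖ ≤ Mq + 1 := le_trans (hMq τ hτ') (by linarith)
        rw [add_zero]
        exact hLip τ hτ' _ _ h1 h2
      intro t htb
      have h := norm_le_gronwallBound_of_norm_deriv_right_le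
        (hgcont.mono (Set.Icc_subset_Icc_right hb.2)) hderiv (le_of_eq hg0) hbound t htb
      rwa [gronwallBound_ε0, sub_zero] at h
    have hexpconc : ∀ t ∈ Set.Icc 0 Δx, |s| * ‖δ‖ * Real.exp (K * t) ≤ |s| * Cδ := by
      intro t ht
      rw [hCδdef, ← mul_assoc]
      exact mul_le_mul_of_nonneg_left
        (Real.exp_le_exp.mpr (mul_le_mul_of_nonneg_left ht.2 hK0)) hnn
    have claim1 : ∀ t ∈ Set.Icc 0 Δx, ‖g t‖ < 1 := by
      by_contra hcon
      push_neg at hcon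
      obtain ⟨t₁, ht₁, hget⟩ := hcon
      set A : Set ℝ := {t | t ∈ Set.Icc 0 Δx ∧ 1 ≤ ‖g t‖} with hAdef
      have hAclosed : IsClosed A := by
        have hc := (hgcont.norm).preimage_isClosed_of_isClosed isClosed_Icc
          (isClosed_Ici (a := (1:ℝ)))
        convert hc using 1
        rfl
      have hAcompact : IsCompact A :=
        IsCompact.of_isClosed_subset isCompact_Icc hAclosed (fun t ht => ht.1)
      obtain ⟨t₀, ⟨ht₀Icc, ht₀g⟩, ht₀lb⟩ := hAcompact.exists_isLeast ⟨t₁, ht₁, hget⟩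
      have hg0lt : ‖g 0‖ < 1 := by rw [hg0]; exact lt_of_le_of_lt hsδCδ hsmall
      have hlt : ∀ τ ∈ Set.Ico 0 t₀, ‖g τ‖ < 1 := by
        intro τ hτ
        by_contra hle1
        push_neg at hle1
        have : t₀ ≤ τ := ht₀lb ⟨⟨hτ.1, le_trans hτ.2.le ht₀Icc.2⟩, hle1⟩
        exact absurd hτ.2 (not_lt.mpr this)
      have hfin := grw t₀ ht₀Icc hlt t₀ ⟨ht₀Icc.1, le_refl _⟩
      have hexp := hexpconc t₀ ht₀Icc
      linarith
    intro t ht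
    show ‖g t‖ ≤ |s| * Cδ
    calc ‖g t‖ ≤ |s| * ‖δ‖ * Real.exp (K * t) :=
          grw Δx hΔmem (fun τ hτ => claim1 τ ⟨hτ.1, hτ.2.le⟩) t ht
      _ ≤ |s| * Cδ := hexpconc t ht
  -- the FTC identity
  have hTcont : ∀ s : ℝ, ContinuousOn (fun t => ∑ i, lam j t i *
      (G (U t (U₀ + s • δ)) t i - G (U t U₀) t i - J t (U t (U₀ + s • δ) - U t U₀) i))
      (Set.Icc 0 Δx) := by
    intro s
    apply continuousOn_finset_sum
    intro i _
    have hlam_i : ContinuousOn (fun t => lam j t i) (Set.Icc 0 Δx) :=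
      (continuous_apply i).comp_continuousOn hlamcont
    have hG1 : ContinuousOn (fun t => G (U t (U₀ + s • δ)) t i) (Set.Icc 0 Δx) :=
      (continuous_apply i).comp_continuousOn
        (hGfC.comp_continuousOn ((hqscont _).prodMk continuousOn_id))
    have hG0 : ContinuousOn (fun t => G (U t U₀) t i) (Set.Icc 0 Δx) :=
      (continuous_apply i).comp_continuousOn
        (hGfC.comp_continuousOn (hq0cont.prodMk continuousOn_id))
    have hJq : ContinuousOn (fun t => J t (U t (U₀ + s • δ) - U t U₀) i) (Set.Icc 0 Δx) :=
      (continuous_apply i).comp_continuousOn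
        (hJcont.clm_apply ((hqscont _).sub hq0cont))
    exact hlam_i.mul ((hG1.sub hG0).sub hJq)
  have hIdent : ∀ s : ℝ,
      (∫ t in (0:ℝ)..Δx, U t (U₀ + s • δ) j) - (∫ t in (0:ℝ)..Δx, U t U₀ j)
        = s * (∑ i, lam j 0 i * δ i) + ∫ t in (0:ℝ)..Δx, ∑ i, lam j t i *
            (G (U t (U₀ + s • δ)) t i - G (U t U₀) t i
              - J t (U t (U₀ + s • δ) - U t U₀) i) := by
    intro s
    set u₁ : Fin N → ℝ := U₀ + s • δ with hu₁def
    have hψderiv : ∀ t ∈ Set.Icc 0 Δx, HasDerivWithinAt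
        (fun τ => ∑ i, lam j τ i * (U τ u₁ i - U τ U₀ i))
        (-(U t u₁ j - U t U₀ j) + ∑ i, lam j t i *
          (G (U t u₁) t i - G (U t U₀) t i - J t (U t u₁ - U t U₀) i))
        (Set.Icc 0 Δx) t := by
      intro t ht
      have hq1 : ∀ i : Fin N, HasDerivWithinAt (fun τ => U τ u₁ i)
          (G (U t u₁) t i) (Set.Icc 0 Δx) t :=
        fun i => hasDerivWithinAt_pi.mp (hUode u₁ t ht) i
      have hq0 : ∀ i : Fin N, HasDerivWithinAt (fun τ => U τ U₀ i)
          (G (U t U₀) t i) (Set.Icc 0 Δx) t :=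
        fun i => hasDerivWithinAt_pi.mp (hUode U₀ t ht) i
      have hraw : HasDerivWithinAt (fun τ => ∑ i, lam j τ i * (U τ u₁ i - U τ U₀ i))
          (∑ i, ((-(if i = j then (1:ℝ) else 0) - ∑ k, DG t k i * lam j t k) *
              (U t u₁ i - U t U₀ i)
            + lam j t i * (G (U t u₁) t i - G (U t U₀) t i)))
          (Set.Icc 0 Δx) t := by
        apply HasDerivWithinAt.fun_sum
        intro i _
        exact (hlam_ode j t ht i).mul ((hq1 i).sub (hq0 i))
      have hJrow : ∀ k : Fin N, (J t (U t u₁ - U t U₀)) k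
          = ∑ i, DG t k i * (U t u₁ i - U t U₀ i) := by
        intro k
        rw [← hDGsum t ht (U t u₁ - U t U₀) k]
        exact Finset.sum_congr rfl fun i _ => by rw [Pi.sub_apply]
      have hsum2 : ∑ i, (∑ k, DG t k i * lam j t k) * (U t u₁ i - U t U₀ i)
          = ∑ k, lam j t k * (J t (U t u₁ - U t U₀) k) := by
        calc ∑ i, (∑ k, DG t k i * lam j t k) * (U t u₁ i - U t U₀ i)
            = ∑ i, ∑ k, DG t k i * lam j t k * (U t u₁ i - U t U₀ i) :=
              Finset.sum_congr rfl fun i _ => Finset.sum_mul _ _ _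
          _ = ∑ k, ∑ i, DG t k i * lam j t k * (U t u₁ i - U t U₀ i) :=
              Finset.sum_comm
          _ = ∑ k, lam j t k * (J t (U t u₁ - U t U₀) k) := by
              refine Finset.sum_congr rfl fun k _ => ?_
              rw [hJrow k, Finset.mul_sum]
              exact Finset.sum_congr rfl fun i _ => by ring
      have hite : ∑ i, (if i = j then (1:ℝ) else 0) * (U t u₁ i - U t U₀ i)
          = U t u₁ j - U t U₀ j := by simp
      have hthird : ∑ i, (lam j t i * (J t (U t u₁ - U t U₀) i)
          - (∑ k, DG t k i * lam j t k) * (U t u₁ i - U t U₀ i)) = 0 := by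
        rw [Finset.sum_sub_distrib, hsum2, sub_self]
      have halg : (∑ i, ((-(if i = j then (1:ℝ) else 0) - ∑ k, DG t k i * lam j t k) *
              (U t u₁ i - U t U₀ i)
            + lam j t i * (G (U t u₁) t i - G (U t U₀) t i)))
          = -(U t u₁ j - U t U₀ j) + ∑ i, lam j t i *
              (G (U t u₁) t i - G (U t U₀) t i - J t (U t u₁ - U t U₀) i) := by
        calc (∑ i, ((-(if i = j then (1:ℝ) else 0) - ∑ k, DG t k i * lam j t k) *
              (U t u₁ i - U t U₀ i)
            + lam j t i * (G (U t u₁) t i - G (U t U₀) t i)))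
            = ∑ i, (lam j t i * (G (U t u₁) t i - G (U t U₀) t i - J t (U t u₁ - U t U₀) i)
                - (if i = j then (1:ℝ) else 0) * (U t u₁ i - U t U₀ i)
                + (lam j t i * (J t (U t u₁ - U t U₀) i)
                  - (∑ k, DG t k i * lam j t k) * (U t u₁ i - U t U₀ i))) :=
              Finset.sum_congr rfl fun i _ => by ring
          _ = (∑ i, (lam j t i * (G (U t u₁) t i - G (U t U₀) t i - J t (U t u₁ - U t U₀) i)
                - (if i = j then (1:ℝ) else 0) * (U t u₁ i - U t U₀ i)))
              + ∑ i, (lam j t i * (J t (U t u₁ - U t U₀) i)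
                  - (∑ k, DG t k i * lam j t k) * (U t u₁ i - U t U₀ i)) :=
              Finset.sum_add_distrib
          _ = (∑ i, lam j t i * (G (U t u₁) t i - G (U t U₀) t i - J t (U t u₁ - U t U₀) i))
              - (∑ i, (if i = j then (1:ℝ) else 0) * (U t u₁ i - U t U₀ i)) + 0 := by
              rw [Finset.sum_sub_distrib, hthird]
          _ = -(U t u₁ j - U t U₀ j) + ∑ i, lam j t i *
              (G (U t u₁) t i - G (U t U₀) t i - J t (U t u₁ - U t U₀) i) := by
              rw [hite]; ring
      exact halg ▸ hraw
    have hψcont : ContinuousOn (fun τ => ∑ i, lam j τ i * (U τ u₁ i - U τ U₀ i))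
        (Set.Icc 0 Δx) := fun t ht => (hψderiv t ht).continuousWithinAt
    have hq1j : ContinuousOn (fun t => U t u₁ j) (Set.Icc 0 Δx) :=
      (continuous_apply j).comp_continuousOn (hqscont u₁)
    have hq0j : ContinuousOn (fun t => U t U₀ j) (Set.Icc 0 Δx) :=
      (continuous_apply j).comp_continuousOn hq0cont
    have hintegrand_cont : ContinuousOn (fun t => -(U t u₁ j - U t U₀ j) + ∑ i, lam j t i *
        (G (U t u₁) t i - G (U t U₀) t i - J t (U t u₁ - U t U₀) i)) (Set.Icc 0 Δx) :=
      ((hq1j.sub hq0j).neg).add (hTcont s)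
    have hFTC := intervalIntegral.integral_eq_sub_of_hasDeriv_right_of_le hle hψcont
      (fun t ht => (hψderiv t (Set.mem_of_mem_of_subset ht Set.Ioo_subset_Icc_self)).mono_of_mem_nhdsWithin
        (Filter.mem_of_superset (Ioc_mem_nhdsGT_of_mem ⟨le_refl t, ht.2⟩)
          (Set.Ioc_subset_Icc_self.trans (Set.Icc_subset_Icc ht.1.le le_rfl))))
      (by
        apply ContinuousOn.intervalIntegrable
        rwa [Set.uIcc_of_le hle])
    have hψΔ : ∑ i, lam j Δx i * (U Δx u₁ i - U Δx U₀ i) = 0 := by simp [hlam_end]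
    have hψ0 : ∑ i, lam j 0 i * (U 0 u₁ i - U 0 U₀ i) = s * ∑ i, lam j 0 i * δ i := by
      rw [hUinit, hUinit, Finset.mul_sum]
      refine Finset.sum_congr rfl fun i _ => ?_
      simp only [hu₁def, Pi.add_apply, Pi.smul_apply, smul_eq_mul]
      ring
    rw [hψΔ, hψ0, zero_sub] at hFTC
    have hint1 : IntervalIntegrable (fun t => U t u₁ j) volume 0 Δx := by
      apply ContinuousOn.intervalIntegrable; rwa [Set.uIcc_of_le hle]
    have hint0 : IntervalIntegrable (fun t => U t U₀ j) volume 0 Δx := by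
      apply ContinuousOn.intervalIntegrable; rwa [Set.uIcc_of_le hle]
    have hintT : IntervalIntegrable (fun t => ∑ i, lam j t i *
        (G (U t u₁) t i - G (U t U₀) t i - J t (U t u₁ - U t U₀) i)) volume 0 Δx := by
      apply ContinuousOn.intervalIntegrable
      rw [Set.uIcc_of_le hle]; exact hTcont s
    have hsplit : (∫ t in (0:ℝ)..Δx, (-(U t u₁ j - U t U₀ j) + ∑ i, lam j t i *
          (G (U t u₁) t i - G (U t U₀) t i - J t (U t u₁ - U t U₀) i)))
        = -((∫ t in (0:ℝ)..Δx, U t u₁ j) - ∫ t in (0:ℝ)..Δx, U t U₀ j)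
          + ∫ t in (0:ℝ)..Δx, ∑ i, lam j t i *
            (G (U t u₁) t i - G (U t U₀) t i - J t (U t u₁ - U t U₀) i) := by
      have hintneg : IntervalIntegrable (fun t => -(U t u₁ j - U t U₀ j)) volume 0 Δx := by
        simpa using hint0.sub hint1
      rw [intervalIntegral.integral_add hintneg hintT,
        intervalIntegral.integral_neg, intervalIntegral.integral_sub hint1 hint0]
    rw [hsplit] at hFTC
    linarith [hFTC]
  -- dominated convergence for the remainder
  have hTlim : Filter.Tendsto (fun s : ℝ => ∫ t in (0:ℝ)..Δx, s⁻¹ * ∑ i, lam j t i *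
      (G (U t (U₀ + s • δ)) t i - G (U t U₀) t i - J t (U t (U₀ + s • δ) - U t U₀) i))
      (nhdsWithin 0 {(0:ℝ)}ᶜ) (nhds 0) := by
    set B : ℝ := (N : ℝ) * (Ml * (2 * (K * Cδ))) with hBdef
    set s₀ : ℝ := (2 * (Cδ + 1))⁻¹ with hs₀def
    have hCpos : (0:ℝ) < Cδ + 1 := by linarith
    have hs₀pos : (0:ℝ) < s₀ := by rw [hs₀def]; positivity
    have hs₀eq : s₀ * (Cδ + 1) = 1/2 := by
      rw [hs₀def]; field_simp
    have hsmall₀ : ∀ s : ℝ, |s| ≤ s₀ → |s| * Cδ < 1 := by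
      intro s hs
      nlinarith [abs_nonneg s, hCδ0, hs₀pos]
    have hev : ∀ᶠ s in nhdsWithin (0:ℝ) {(0:ℝ)}ᶜ, s ≠ 0 ∧ |s| ≤ s₀ := by
      have h1 : ∀ᶠ s in nhdsWithin (0:ℝ) {(0:ℝ)}ᶜ, s ≠ 0 := by
        filter_upwards [self_mem_nhdsWithin] with x hx
        simpa using hx
      have h2 : ∀ᶠ s in nhds (0:ℝ), |s| ≤ s₀ := by
        filter_upwards [Metric.closedBall_mem_nhds (0:ℝ) hs₀pos] with x hx
        simpa [Real.dist_eq] using hx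
      exact h1.and (h2.filter_mono nhdsWithin_le_nhds)
    have hDCT : Filter.Tendsto (fun s : ℝ => ∫ t in (0:ℝ)..Δx, s⁻¹ * ∑ i, lam j t i * (G (U t (U₀ + s • δ)) t i - G (U t U₀) t i - J t (U t (U₀ + s • δ) - U t U₀) i))
        (nhdsWithin (0:ℝ) {(0:ℝ)}ᶜ) (nhds (∫ t in (0:ℝ)..Δx, (0:ℝ))) := by
      apply intervalIntegral.tendsto_integral_filter_of_dominated_convergence
        (f := fun _ => (0:ℝ)) (bound := fun _ => B)
      · refine Filter.Eventually.of_forall fun s => ?_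
        have hc : ContinuousOn (fun t => s⁻¹ * ∑ i, lam j t i *
            (G (U t (U₀ + s • δ)) t i - G (U t U₀) t i - J t (U t (U₀ + s • δ) - U t U₀) i))
            (Set.Ioc 0 Δx) :=
          (continuousOn_const.mul (hTcont s)).mono Set.Ioc_subset_Icc_self
        rw [Set.uIoc_of_le hle]
        exact hc.aestronglyMeasurable measurableSet_Ioc
      · filter_upwards [hev] with s hs
        refine Filter.Eventually.of_forall fun t ht' => ?_
        have ht : t ∈ Set.Icc 0 Δx := by
          rw [Set.uIoc_of_le hle] at ht'; exact ⟨ht'.1.le, ht'.2⟩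
        obtain ⟨hs0, hss₀⟩ := hs
        have hkb := key_bound s (hsmall₀ s hss₀) t ht
        have habs : |s| ≠ 0 := abs_ne_zero.mpr hs0
        have h2 : ‖U t U₀‖ ≤ Mq + 1 := le_trans (hMq t ht) (by linarith)
        have hup : ‖U t (U₀ + s • δ)‖ ≤ ‖U t U₀‖ + ‖U t (U₀ + s • δ) - U t U₀‖ := by
          simpa using norm_add_le (U t U₀) (U t (U₀ + s • δ) - U t U₀)
        have h1 : ‖U t (U₀ + s • δ)‖ ≤ Mq + 1 :=
          le_trans hup (add_le_add (hMq t ht) (le_trans hkb (hsmall₀ s hss₀).le))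
        have hGdiff_norm : ‖G (U t (U₀ + s • δ)) t - G (U t U₀) t‖ ≤ K * (|s| * Cδ) :=
          le_trans (hLip t ht _ _ h1 h2) (mul_le_mul_of_nonneg_left hkb hK0)
        have hJ_norm : ‖J t (U t (U₀ + s • δ) - U t U₀)‖ ≤ K * (|s| * Cδ) :=
          le_trans (hJbound t ht _) (mul_le_mul_of_nonneg_left hkb hK0)
        have hterm : ∀ i : Fin N, |lam j t i * (G (U t (U₀ + s • δ)) t i - G (U t U₀) t i
            - J t (U t (U₀ + s • δ) - U t U₀) i)| ≤ Ml * (2 * (K * (|s| * Cδ))) := by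
          intro i
          have hl : |lam j t i| ≤ Ml := le_trans (norm_le_pi_norm (lam j t) i) (hMl t ht)
          have hg : |G (U t (U₀ + s • δ)) t i - G (U t U₀) t i| ≤ K * (|s| * Cδ) :=
            le_trans (by simpa using
              norm_le_pi_norm (G (U t (U₀ + s • δ)) t - G (U t U₀) t) i) hGdiff_norm
          have hj : |J t (U t (U₀ + s • δ) - U t U₀) i| ≤ K * (|s| * Cδ) :=
            le_trans (by simpa using
              norm_le_pi_norm ((J t) (U t (U₀ + s • δ) - U t U₀)) i) hJ_norm
          have hy : |G (U t (U₀ + s • δ)) t i - G (U t U₀) t i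
              - J t (U t (U₀ + s • δ) - U t U₀) i| ≤ 2 * (K * (|s| * Cδ)) := by
            have h3 := abs_sub (G (U t (U₀ + s • δ)) t i - G (U t U₀) t i)
              (J t (U t (U₀ + s • δ) - U t U₀) i)
            linarith
          rw [abs_mul]
          exact mul_le_mul hl hy (abs_nonneg _) hMl0
        have hT : |∑ i, lam j t i * (G (U t (U₀ + s • δ)) t i - G (U t U₀) t i - J t (U t (U₀ + s • δ) - U t U₀) i)| ≤ (N : ℝ) * (Ml * (2 * (K * (|s| * Cδ)))) := by
          calc |∑ i, lam j t i * (G (U t (U₀ + s • δ)) t i - G (U t U₀) t i - J t (U t (U₀ + s • δ) - U t U₀) i)|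
              ≤ ∑ i, |lam j t i * (G (U t (U₀ + s • δ)) t i - G (U t U₀) t i
                - J t (U t (U₀ + s • δ) - U t U₀) i)| := Finset.abs_sum_le_sum_abs _ _
            _ ≤ ∑ _i : Fin N, Ml * (2 * (K * (|s| * Cδ))) :=
                Finset.sum_le_sum fun i _ => hterm i
            _ = (N : ℝ) * (Ml * (2 * (K * (|s| * Cδ)))) := by
                simp [Finset.sum_const, Finset.card_univ, nsmul_eq_mul]
        rw [Real.norm_eq_abs, abs_mul, abs_inv]
        calc |s|⁻¹ * |∑ i, lam j t i * (G (U t (U₀ + s • δ)) t i - G (U t U₀) t i - J t (U t (U₀ + s • δ) - U t U₀) i)|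
            ≤ |s|⁻¹ * ((N : ℝ) * (Ml * (2 * (K * (|s| * Cδ))))) :=
              mul_le_mul_of_nonneg_left hT (inv_nonneg.mpr (abs_nonneg _))
          _ = B * (|s|⁻¹ * |s|) := by rw [hBdef]; ring
          _ = B := by rw [inv_mul_cancel₀ habs, mul_one]
      · exact intervalIntegrable_const
      · refine Filter.Eventually.of_forall fun t ht' => ?_
        have ht : t ∈ Set.Icc 0 Δx := by
          rw [Set.uIoc_of_le hle] at ht'; exact ⟨ht'.1.le, ht'.2⟩
        have hslope_q : Filter.Tendsto (fun s : ℝ => s⁻¹ • (U t (U₀ + s • δ) - U t U₀))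
            (nhdsWithin (0:ℝ) {(0:ℝ)}ᶜ) (nhds (V δ t)) := by
          refine Filter.Tendsto.congr' ?_ (hasDerivAt_iff_tendsto_slope.mp (hV δ t ht))
          filter_upwards [self_mem_nhdsWithin] with s _
          simp only [slope_def_module, sub_zero, zero_smul, add_zero]
        have hJV : Filter.Tendsto (fun s : ℝ => J t (s⁻¹ • (U t (U₀ + s • δ) - U t U₀)))
            (nhdsWithin (0:ℝ) {(0:ℝ)}ᶜ) (nhds (J t (V δ t))) :=
          ((J t).continuous.tendsto _).comp hslope_q
        have hslope_G : Filter.Tendsto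
            (fun s : ℝ => s⁻¹ • (G (U t (U₀ + s • δ)) t - G (U t U₀) t))
            (nhdsWithin (0:ℝ) {(0:ℝ)}ᶜ) (nhds (J t (V δ t))) := by
          have hq : HasDerivAt (fun s : ℝ => ((U t (U₀ + s • δ), t) : (Fin N → ℝ) × ℝ))
              ((V δ t, (0:ℝ))) 0 := (hV δ t ht).prodMk (hasDerivAt_const 0 t)
          have hGf : HasFDerivAt Gf (fderiv ℝ Gf (U t U₀, t)) (U t (U₀ + (0:ℝ) • δ), t) := by
            simpa using (hGfdiff (U t U₀, t)).hasFDerivAt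
          have h2 := hGf.comp_hasDerivAt 0 hq
          have h3 := hasDerivAt_iff_tendsto_slope.mp h2
          rw [hJapply]
          refine Filter.Tendsto.congr' ?_ h3
          filter_upwards [self_mem_nhdsWithin] with s _
          simp only [slope_def_module, sub_zero, zero_smul, add_zero, Function.comp]
          rfl
        have hcomb : Filter.Tendsto (fun s : ℝ => s⁻¹ • ((G (U t (U₀ + s • δ)) t - G (U t U₀) t)
            - J t (U t (U₀ + s • δ) - U t U₀)))
            (nhdsWithin (0:ℝ) {(0:ℝ)}ᶜ) (nhds 0) := by
          have hsub := hslope_G.sub hJV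
          rw [sub_self] at hsub
          refine Filter.Tendsto.congr (fun s => ?_) hsub
          rw [(J t).map_smul, ← smul_sub]
        have hsum := tendsto_finset_sum Finset.univ
          (fun i (_ : i ∈ Finset.univ) =>
            (((continuous_apply i).tendsto _).comp hcomb).const_mul (lam j t i))
        have heq : ∀ s : ℝ, s⁻¹ * ∑ i, lam j t i * (G (U t (U₀ + s • δ)) t i - G (U t U₀) t i - J t (U t (U₀ + s • δ) - U t U₀) i)
            = ∑ i, lam j t i * ((s⁻¹ • ((G (U t (U₀ + s • δ)) t - G (U t U₀) t)
              - J t (U t (U₀ + s • δ) - U t U₀))) i) := by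
          intro s
          rw [Finset.mul_sum]
          refine Finset.sum_congr rfl fun i _ => ?_
          simp only [Pi.smul_apply, Pi.sub_apply, smul_eq_mul]
          ring
        refine Filter.Tendsto.congr (fun s => (heq s).symm) ?_
        have h0 : (∑ i : Fin N, lam j t i * ((0 : Fin N → ℝ) i)) = 0 := by simp
        rw [h0] at hsum
        exact hsum
    have h00 : (∫ _t in (0:ℝ)..Δx, (0:ℝ)) = 0 := intervalIntegral.integral_zero
    rw [h00] at hDCT
    exact hDCT
  -- step 2
  have hstep2 : (∫ t in (0:ℝ)..Δx, V δ t j) = ∑ i, lam j 0 i * δ i := by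
    have hA := hasDerivAt_iff_tendsto_slope.mp (hswap δ j)
    have hcongr : ∀ᶠ s in nhdsWithin (0:ℝ) {(0:ℝ)}ᶜ,
        slope (fun s : ℝ => ∫ x in (0:ℝ)..Δx, U x (U₀ + s • δ) j) 0 s
        = (∑ i, lam j 0 i * δ i) + ∫ t in (0:ℝ)..Δx, s⁻¹ * ∑ i, lam j t i * (G (U t (U₀ + s • δ)) t i - G (U t U₀) t i - J t (U t (U₀ + s • δ) - U t U₀) i) := by
      filter_upwards [self_mem_nhdsWithin] with s hs
      have hs0 : s ≠ 0 := by simpa using hs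
      simp only [slope_def_field, sub_zero, zero_smul, add_zero]
      rw [hIdent s, intervalIntegral.integral_const_mul]
      field_simp
    have hlim2 : Filter.Tendsto (fun s : ℝ =>
        (∑ i, lam j 0 i * δ i) + ∫ t in (0:ℝ)..Δx, s⁻¹ * ∑ i, lam j t i * (G (U t (U₀ + s • δ)) t i - G (U t U₀) t i - J t (U t (U₀ + s • δ) - U t U₀) i))
        (nhdsWithin (0:ℝ) {(0:ℝ)}ᶜ) (nhds ((∑ i, lam j 0 i * δ i) + 0)) :=
      tendsto_const_nhds.add hTlim
    have huniq := tendsto_nhds_unique (Filter.Tendsto.congr' hcongr hA) hlim2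
    rw [add_zero] at huniq
    exact huniq
  -- step 1
  have hcomp_int : ∀ u₀, (∫ x in (0:ℝ)..Δx, U x u₀) j = ∫ x in (0:ℝ)..Δx, U x u₀ j := by
    intro u₀
    have hint : IntervalIntegrable (fun x => U x u₀) volume 0 Δx := by
      apply ContinuousOn.intervalIntegrable
      rw [Set.uIcc_of_le hle]; exact hqscont u₀
    simpa using
      (ContinuousLinearMap.intervalIntegral_comp_comm
        (ContinuousLinearMap.proj (R := ℝ) (φ := fun _ : Fin N => ℝ) j) hint).symm
  have hline : HasDerivAt (fun s : ℝ => U₀ + s • δ) δ 0 := by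
    simpa using ((hasDerivAt_id (0:ℝ)).smul_const δ).const_add U₀
  have hFδ : HasDerivAt (fun s : ℝ => F (U₀ + s • δ) j) (L δ j) 0 := by
    have hL' : HasFDerivAt F L (U₀ + (0:ℝ) • δ) := by simpa using hL
    have h1 := hL'.comp_hasDerivAt 0 hline
    exact hasDerivAt_pi.mp h1 j
  have hother : HasDerivAt (fun s : ℝ => F (U₀ + s • δ) j)
      (Δx⁻¹ * ∫ t in (0:ℝ)..Δx, V δ t j) 0 := by
    have hrw : (fun s : ℝ => F (U₀ + s • δ) j)
        = fun s => Δx⁻¹ * ∫ t in (0:ℝ)..Δx, U t (U₀ + s • δ) j := by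
      funext s; rw [hF, Pi.smul_apply, smul_eq_mul, hcomp_int]
    rw [hrw]
    exact (hswap δ j).const_mul Δx⁻¹
  rw [hFδ.unique hother, hstep2]
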